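/- Let C be a weak model category and S a class of core cofibrations closed under a choice of relative cylinder codiagonals ∇ (i.e., for each j in S some ∇j : B ⊔_A B → I_A B lies in the class generated by S and the anodyne cofibrations). Suppose a new premodel structure on C has the same fibrations and anodyne fibrations as a structure whose anodyne cofibrations are generated by the anodyne cofibrations of C together with S. Then a map between fibrant objects of the new structure is a fibration of the new structure if and only if it is a fibration of C. -/

import Mathlib

open CategoryTheory CategoryTheory.Limits

universe v u

/-- A premodel category structure on a complete and cocomplete category `C`:
two weak factorization systems (cofibrations, anodyne fibrations) and
(anodyne cofibrations, fibrations), with anodyne cofibrations ⊆ cofibrations. -/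
structure Premodel (C : Type u) [Category.{v} C] [HasLimits C] [HasColimits C] where
  Cof : MorphismProperty C
  AnCof : MorphismProperty C
  Fib : MorphismProperty C
  AnFib : MorphismProperty C
  anCof_le_cof : ∀ {X Y : C} (f : X ⟶ Y), AnCof f → Cof f
  cof_llp : ∀ {X Y A B : C} (f : X ⟶ Y) (g : A ⟶ B), Cof f → AnFib g → HasLiftingProperty f g
  cof_of_llp : ∀ {X Y : C} (f : X ⟶ Y),
    (∀ {A B : C} (g : A ⟶ B), AnFib g → HasLiftingProperty f g) → Cof f
  anFib_of_rlp : ∀ {X Y : C} (g : X ⟶ Y),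
    (∀ {A B : C} (f : A ⟶ B), Cof f → HasLiftingProperty f g) → AnFib g
  fact_cof_anFib : ∀ {X Y : C} (f : X ⟶ Y),
    ∃ (Z : C) (i : X ⟶ Z) (p : Z ⟶ Y), Cof i ∧ AnFib p ∧ i ≫ p = f
  anCof_llp : ∀ {X Y A B : C} (f : X ⟶ Y) (g : A ⟶ B), AnCof f → Fib g → HasLiftingProperty f g
  anCof_of_llp : ∀ {X Y : C} (f : X ⟶ Y),
    (∀ {A B : C} (g : A ⟶ B), Fib g → HasLiftingProperty f g) → AnCof f
  fib_of_rlp : ∀ {X Y : C} (g : X ⟶ Y),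
    (∀ {A B : C} (f : A ⟶ B), AnCof f → HasLiftingProperty f g) → Fib g
  fact_anCof_fib : ∀ {X Y : C} (f : X ⟶ Y),
    ∃ (Z : C) (i : X ⟶ Z) (p : Z ⟶ Y), AnCof i ∧ Fib p ∧ i ≫ p = f

namespace Premodel

variable {C : Type u} [Category.{v} C] [HasLimits C] [HasColimits C] (P : Premodel C)

/-- An object is fibrant if its map to the terminal object is a fibration. -/
def Fibrant (X : C) : Prop := P.Fib (terminal.from X)

/-- An object is cofibrant if the map from the initial object is a cofibration. -/
def Cofibrant (X : C) : Prop := P.Cof (initial.to X)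

/-- An acyclic cofibration: a cofibration with the left lifting property against
all fibrations between fibrant objects. -/
def AcyclicCof {X Y : C} (f : X ⟶ Y) : Prop :=
  P.Cof f ∧ ∀ {A B : C} (g : A ⟶ B), P.Fib g → P.Fibrant A → P.Fibrant B →
    HasLiftingProperty f g

/-- An acyclic fibration: a fibration with the right lifting property against
all cofibrations between cofibrant objects. -/
def AcyclicFib {X Y : C} (g : X ⟶ Y) : Prop :=
  P.Fib g ∧ ∀ {A B : C} (f : A ⟶ B), P.Cof f → P.Cofibrant A → P.Cofibrant B →
    HasLiftingProperty f g

end Premodel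

variable {C : Type u} [Category.{v} C] [HasLimits C] [HasColimits C]

/-- A weak model category: a premodel category in which every core cofibration admits a
relative weak cylinder object and every core fibration admits a relative weak path
object. -/
structure WeakModel (C : Type u) [Category.{v} C] [HasLimits C] [HasColimits C]
    extends Premodel C where
  cylinderAxiom : ∀ {A B : C} (i : A ⟶ B), toPremodel.Cof i → toPremodel.Cofibrant A →
    ∃ (I D : C) (c : pushout i i ⟶ I) (d : I ⟶ D) (e : B ⟶ D),
      toPremodel.Cof c ∧
      toPremodel.AcyclicCof (pushout.inl i i ≫ c) ∧
      toPremodel.AcyclicCof e ∧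
      pushout.desc (𝟙 B) (𝟙 B) rfl ≫ e = c ≫ d
  pathAxiom : ∀ {X Y : C} (p : X ⟶ Y), toPremodel.Fib p → toPremodel.Fibrant Y →
    ∃ (Pb D : C) (c : Pb ⟶ pullback p p) (d : D ⟶ Pb) (e : D ⟶ X),
      toPremodel.Fib c ∧
      toPremodel.AcyclicFib (c ≫ pullback.fst p p) ∧
      toPremodel.AcyclicFib e ∧
      e ≫ pullback.lift (𝟙 X) (𝟙 X) rfl = d ≫ c

/-- Fibrations of the new premodel structure: maps with the right lifting property
against the generating anodyne cofibrations of the new structure, namely the anodyne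
cofibrations of `C` together with the maps of `S`. -/
def NewFib (M : WeakModel C) (S : MorphismProperty C) {X Y : C} (g : X ⟶ Y) : Prop :=
  ∀ {A B : C} (f : A ⟶ B), (M.AnCof f ∨ S f) → HasLiftingProperty f g

/-- Let `C` be a weak model category and `S` a class of core cofibrations closed under a
choice of relative cylinder codiagonals `∇` lying in the class generated by `S` and the
anodyne cofibrations. Then a map between fibrant objects of the new structure (whose
anodyne cofibrations are generated by the anodyne cofibrations of `C` together with `S`)
is a fibration of the new structure if and only if it is a fibration of `C`. -/
theorem new_fibration_between_new_fibrants (M : WeakModel C) (S : MorphismProperty C)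
    (hScore : ∀ {A B : C} (j : A ⟶ B), S j → M.Cof j ∧ M.toPremodel.Cofibrant A)
    (hnabla : ∀ {A B : C} (j : A ⟶ B), S j →
      ∃ (I D : C) (c : pushout j j ⟶ I) (d : I ⟶ D) (e : B ⟶ D),
        M.Cof c ∧
        M.toPremodel.AcyclicCof (pushout.inl j j ≫ c) ∧
        M.toPremodel.AcyclicCof e ∧
        pushout.desc (𝟙 B) (𝟙 B) rfl ≫ e = c ≫ d ∧
        -- the chosen `∇j = c` lies in the class generated by `S` and the anodyne
        -- cofibrations: it lifts against every map with the right lifting property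
        -- against the generators
        (∀ {X Y : C} (g : X ⟶ Y), NewFib M S g → HasLiftingProperty c g)) :
    ∀ {X Y : C} (g : X ⟶ Y), NewFib M S (terminal.from X) → NewFib M S (terminal.from Y) →
      (NewFib M S g ↔ M.Fib g) := by
  intro X Y g hX hY
  constructor
  · intro hg
    exact M.fib_of_rlp g (fun f hf => hg f (Or.inl hf))
  · intro hg A B j hj
    rcases hj with hj | hj
    · exact M.anCof_llp j g hj hg
    · have hXf : M.Fib (terminal.from X) := M.fib_of_rlp _ (fun f hf => hX f (Or.inl hf))
      have hYf : M.Fib (terminal.from Y) := M.fib_of_rlp _ (fun f hf => hY f (Or.inl hf))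
      obtain ⟨I, D, c, d, e, hc, hinl, he, hcomm, hgen⟩ := hnabla j hj
      haveI hlX : HasLiftingProperty j (terminal.from X) := hX j (Or.inr hj)
      haveI hlc : HasLiftingProperty c (terminal.from Y) := hgen _ hY
      haveI hinlg : HasLiftingProperty (pushout.inl j j ≫ c) g := hinl.2 g hg hXf hYf
      constructor
      intro u v sq
      have sq1 : CommSq u j (terminal.from X) (terminal.from B) :=
        ⟨terminal.hom_ext _ _⟩
      let ℓ : B ⟶ X := sq1.lift
      have hℓ : j ≫ ℓ = u := sq1.fac_left
      have hdesc : j ≫ (ℓ ≫ g) = j ≫ v := by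
        rw [← Category.assoc, hℓ, sq.w]
      let w : pushout j j ⟶ Y := pushout.desc (ℓ ≫ g) v hdesc
      have sq2 : CommSq w c (terminal.from Y) (terminal.from I) :=
        ⟨terminal.hom_ext _ _⟩
      let H : I ⟶ Y := sq2.lift
      have hH : c ≫ H = w := sq2.fac_left
      have sq3 : CommSq ℓ (pushout.inl j j ≫ c) g H := by
        constructor
        rw [Category.assoc, hH]
        simp [w]
        exact (pushout.inl_desc _ _ _).symm
      let K : I ⟶ X := sq3.lift
      have hK1 : (pushout.inl j j ≫ c) ≫ K = ℓ := sq3.fac_left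
      have hK2 : K ≫ g = H := sq3.fac_right
      have hK1' : pushout.inl j j ≫ c ≫ K = ℓ := by rw [← hK1]; simp
      exact ⟨⟨⟨pushout.inr j j ≫ c ≫ K, by
        rw [← pushout.condition_assoc, hK1', hℓ], by
        rw [Category.assoc, Category.assoc, hK2, hH]
        simp [w]
        exact pushout.inr_desc _ _ _⟩⟩⟩
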